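/- Let R be a left noetherian domain and let A be a skew PBW extension of R with variables x_1,…,x_n, semi-graded by total degree. Then GGKdim(A) = limsup_{k→∞} log_k(∑_{i=0}^k rank_R A_i) = 1 + deg(Gp_A(t)) = n, where Gp_A(t) is the generalized Hilbert polynomial of A (of degree n−1). -/

import Mathlib

/-- A *skew PBW extension* of a ring `R` inside a ring `A`, with variables `x 0, …, x (n-1)`. -/
structure SkewPBWExtension (R A : Type*) [Ring R] [Ring A] (n : ℕ) (x : Fin n → A) where
  ι : R →+* A
  ι_injective : Function.Injective ι
  basis : ∀ a : A, ∃! c : (Fin n → ℕ) →₀ R,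
    a = c.sum fun α r => ι r * (List.ofFn fun i => x i ^ α i).prod
  cond3 : ∀ (i : Fin n) (r : R), r ≠ 0 →
    ∃ c : R, c ≠ 0 ∧ ∃ r' : R, x i * ι r = ι c * x i + ι r'
  cond4 : ∀ i j : Fin n, ∃ c : R, c ≠ 0 ∧
    ∃ (r0 : R) (r' : Fin n → R), x j * x i = ι c * (x i * x j) + ι r0 + ∑ k, ι (r' k) * x k

variable {R A : Type*} [Ring R] [Ring A] {n : ℕ} {x : Fin n → A}

/-- The left `R`-submodule of `A` generated by a set `s`. -/
def SkewPBWExtension.rSpan (E : SkewPBWExtension R A n x) (s : Set A) : AddSubgroup A :=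
  AddSubgroup.closure {y : A | ∃ (r : R), ∃ w ∈ s, y = E.ι r * w}

/-- An additive subgroup of `A` stable under left multiplication by (the image of) `R`. -/
def SkewPBWExtension.IsRStable (E : SkewPBWExtension R A n x) (W : AddSubgroup A) : Prop :=
  ∀ (r : R), ∀ w ∈ W, E.ι r * w ∈ W

/-- The tuple `v` spans a *frame* of `A`: a finitely generated free left `R`-submodule
`V ⊆ A` with basis `v` and `1 ∈ V`. -/
def SkewPBWExtension.IsFrame (E : SkewPBWExtension R A n x) {k : ℕ} (v : Fin k → A) :
    Prop :=
  (∀ c c' : Fin k → R, ∑ i, E.ι (c i) * v i = ∑ i, E.ι (c' i) * v i → c = c') ∧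
  (1 : A) ∈ E.rSpan (Set.range v)

/-- `V^m`: the left `R`-submodule generated by products of `m` elements of the frame. -/
def SkewPBWExtension.framePow (E : SkewPBWExtension R A n x) {k : ℕ} (v : Fin k → A)
    (m : ℕ) : AddSubgroup A :=
  E.rSpan {y : A | ∃ w : Fin m → A,
    (∀ j, w j ∈ E.rSpan (Set.range v)) ∧ y = (List.ofFn w).prod}

/-- The uniform (Goldie) dimension of a left `R`-submodule `W` of `A`. -/
noncomputable def SkewPBWExtension.udim (E : SkewPBWExtension R A n x)
    (W : AddSubgroup A) : ℕ :=
  sSup {m : ℕ | ∃ f : Fin m → AddSubgroup A, (∀ i, f i ≠ ⊥) ∧ (∀ i, f i ≤ W) ∧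
    (∀ i, E.IsRStable (f i)) ∧ iSupIndep f}

/-- The generalized Gelfand-Kirillov dimension of a skew PBW extension:
`GGKdim(A) = sup_V limsup_{m→∞} log_m (udim V^m)` over all frames `V`. -/
noncomputable def SkewPBWExtension.GGKdim (E : SkewPBWExtension R A n x) : EReal :=
  ⨆ (k : ℕ) (v : Fin k → A) (_ : E.IsFrame v),
    Filter.limsup (fun m : ℕ => ((Real.logb m (E.udim (E.framePow v m)) : ℝ) : EReal))
      Filter.atTop

/-- `Gp_A(t) = (1/(n-1)!) (t+1)(t+2)⋯(t+n-1)`, the generalized Hilbert polynomial. -/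
noncomputable def skewPBWHilbertPolynomial (n : ℕ) : Polynomial ℚ :=
  Polynomial.C (((n - 1).factorial : ℚ))⁻¹ *
    ∏ i ∈ Finset.range (n - 1), (Polynomial.X + Polynomial.C ((i : ℚ) + 1))

namespace SPBW

/-- The standard monomial `x^α`. -/
def mono (x : Fin n → A) (α : Fin n → ℕ) : A := (List.ofFn fun i => x i ^ α i).prod

variable (E : SkewPBWExtension R A n x)

theorem repr_spec (a : A) : a = ((E.basis a).exists.choose).sum fun α r => E.ι r * mono x α :=
  (E.basis a).exists.choose_spec

theorem repr_unique {a : A} {c : (Fin n → ℕ) →₀ R}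
    (h : a = c.sum fun α r => E.ι r * mono x α) : c = (E.basis a).exists.choose := by
  obtain ⟨c₀, _, huniq⟩ := E.basis a
  rw [huniq c h, huniq _ (repr_spec E a)]

/-- Coordinate of `a` at monomial `α`. -/
noncomputable def coord (a : A) : (Fin n → ℕ) →₀ R := (E.basis a).exists.choose

theorem coord_eq {a : A} {c : (Fin n → ℕ) →₀ R}
    (h : a = c.sum fun α r => E.ι r * mono x α) : coord E a = c := (repr_unique E h).symm

theorem coord_spec (a : A) : a = (coord E a).sum fun α r => E.ι r * mono x α := repr_spec E a

theorem coord_single (r : R) (α : Fin n → ℕ) :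
    coord E (E.ι r * mono x α) = Finsupp.single α r := by
  refine coord_eq E ?_
  rw [Finsupp.sum_single_index]
  simp

theorem coord_zero : coord E (0 : A) = 0 := by
  refine coord_eq E ?_; simp

theorem coord_add (a b : A) : coord E (a + b) = coord E a + coord E b := by
  refine coord_eq E ?_
  rw [Finsupp.sum_add_index (by intro α _; simp) (by intro α _ r s; rw [map_add, add_mul])]
  conv_lhs => rw [coord_spec E a, coord_spec E b]

theorem coord_neg (a : A) : coord E (-a) = - coord E a := by
  have h := coord_add E a (-a)
  rw [add_neg_cancel, coord_zero] at h
  exact (neg_eq_of_add_eq_zero_right h.symm).symm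

theorem coord_smul (r : R) (a : A) : coord E (E.ι r * a) = r • coord E a := by
  refine coord_eq E ?_
  rw [Finsupp.sum_smul_index (by intro α; simp)]
  conv_lhs => rw [coord_spec E a]
  rw [Finsupp.mul_sum]
  exact Finsupp.sum_congr fun α _ => by rw [← mul_assoc, ← map_mul]

theorem eq_zero_of_coord_eq_zero {a : A} (h : coord E a = 0) : a = 0 := by
  have := coord_spec E a
  rw [h] at this
  simpa using this


/-! ### rSpan lemmas -/

theorem mem_rSpan_mul {s : Set A} {w : A} (hw : w ∈ s) (r : R) : E.ι r * w ∈ E.rSpan s :=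
  AddSubgroup.subset_closure ⟨r, w, hw, rfl⟩

theorem mem_rSpan {s : Set A} {w : A} (hw : w ∈ s) : w ∈ E.rSpan s := by
  simpa using mem_rSpan_mul E hw 1

theorem rSpan_isRStable (s : Set A) : E.IsRStable (E.rSpan s) := by
  intro r w hw
  induction hw using AddSubgroup.closure_induction with
  | mem y hy =>
      obtain ⟨r', w', hw', rfl⟩ := hy
      rw [← mul_assoc, ← map_mul]
      exact AddSubgroup.subset_closure ⟨r * r', w', hw', rfl⟩
  | zero => simpa using AddSubgroup.zero_mem _
  | add a b _ _ ha hb => rw [mul_add]; exact AddSubgroup.add_mem _ ha hb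
  | neg a _ ha => rw [mul_neg]; exact AddSubgroup.neg_mem _ ha

theorem rSpan_le {s : Set A} {W : AddSubgroup A} (hst : E.IsRStable W) (h : s ⊆ W) :
    E.rSpan s ≤ W := by
  refine (AddSubgroup.closure_le _).mpr ?_
  rintro y ⟨r, w, hw, rfl⟩
  exact hst r w (h hw)

theorem rSpan_mono {s t : Set A} (h : s ⊆ t) : E.rSpan s ≤ E.rSpan t :=
  rSpan_le E (rSpan_isRStable E t) fun w hw => mem_rSpan E (h hw)

theorem coord_support_subset {S : Set (Fin n → ℕ)} {a : A}
    (ha : a ∈ E.rSpan {y | ∃ α ∈ S, y = mono x α}) :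
    ↑(coord E a).support ⊆ S := by
  induction ha using AddSubgroup.closure_induction with
  | mem y hy =>
      obtain ⟨r, w, ⟨α, hα, rfl⟩, rfl⟩ := hy
      rw [coord_single]
      exact (Finset.coe_subset.mpr Finsupp.support_single_subset).trans (by simpa using hα)
  | zero => rw [coord_zero]; simp
  | add a b _ _ ha hb =>
      rw [coord_add]
      refine subset_trans ?_ (Set.union_subset ha hb)
      exact_mod_cast Finset.coe_subset.mpr Finsupp.support_add
  | neg a _ ha => rw [coord_neg, Finsupp.support_neg]; exact ha

/-! ### monomial structure -/

/-- the product of the factors of `mono x α` with index `> i`. -/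
def rest (x : Fin n → A) (α : Fin n → ℕ) (i : Fin n) : A :=
  ((List.ofFn fun j => x j ^ α j).drop (i + 1)).prod

theorem mono_eq_pow_mul_rest (i : Fin n) (α : Fin n → ℕ) (h : ∀ j, j < i → α j = 0) :
    mono x α = x i ^ α i * rest x α i := by
  set l := List.ofFn fun j => x j ^ α j with hl
  have hlen : l.length = n := by simp [hl]
  have hi : (i : ℕ) < l.length := by rw [hlen]; exact i.isLt
  have htake : (l.take i).prod = 1 := by
    refine List.prod_eq_one fun a ha => ?_
    obtain ⟨m, hm, rfl⟩ := List.mem_take_iff_getElem.mp ha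
    have hmi : m < (i : ℕ) := lt_of_lt_of_le hm (min_le_left _ _)
    have hmn : m < n := lt_of_lt_of_le hm (by rw [hlen]; exact min_le_right _ _)
    have : α ⟨m, hmn⟩ = 0 := h ⟨m, hmn⟩ (by simpa [Fin.lt_def] using hmi)
    simp [hl, List.getElem_ofFn, this]
  have hdrop : l.drop i = x i ^ α i :: l.drop (i + 1) := by
    rw [List.drop_eq_getElem_cons hi]
    congr 1
    simp [hl, List.getElem_ofFn]
  calc mono x α = (l.take i).prod * (l.drop i).prod := (List.prod_take_mul_prod_drop l i).symm
    _ = x i ^ α i * rest x α i := by rw [htake, hdrop, one_mul, List.prod_cons]; rfl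

theorem rest_congr {α β : Fin n → ℕ} (i : Fin n) (h : ∀ j, i < j → α j = β j) :
    rest x α i = rest x β i := by
  unfold rest
  congr 1
  apply List.ext_getElem (by simp)
  intro m h1 h2
  rw [List.getElem_drop, List.getElem_drop]
  have hlt : (i : ℕ) + 1 + m < n := by simp at h1; omega
  simp only [List.getElem_ofFn]
  congr 1
  exact h ⟨(i:ℕ)+1+m, hlt⟩ (by simp [Fin.lt_def]; omega)

theorem mono_zero_exp : mono x (fun _ => 0) = 1 := by
  refine List.prod_eq_one fun a ha => ?_
  obtain ⟨i, rfl⟩ := List.mem_ofFn.mp ha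
  simp

theorem x_mul_mono (i : Fin n) (α : Fin n → ℕ) (h : ∀ j, j < i → α j = 0) :
    x i * mono x α = mono x (Function.update α i (α i + 1)) := by
  have h' : ∀ j, j < i → Function.update α i (α i + 1) j = 0 := by
    intro j hj
    rw [Function.update_of_ne (ne_of_lt hj)]
    exact h j hj
  have hr : rest x (Function.update α i (α i + 1)) i = rest x α i :=
    rest_congr i fun j hj => Function.update_of_ne (ne_of_gt hj) _ _
  rw [mono_eq_pow_mul_rest i α h, mono_eq_pow_mul_rest i _ h', hr,
    Function.update_self, pow_succ', mul_assoc]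

theorem mono_decomp (i : Fin n) (α : Fin n → ℕ) (h : ∀ j, j < i → α j = 0) (hi : 0 < α i) :
    mono x α = x i * mono x (Function.update α i (α i - 1)) := by
  rw [x_mul_mono i _ (fun j hj => by rw [Function.update_of_ne (ne_of_lt hj)]; exact h j hj)]
  congr 1
  simp [Nat.sub_add_cancel hi]


/-! ### degree filtration -/

def deg (α : Fin n → ℕ) : ℕ := ∑ j, α j

theorem deg_update_add (α : Fin n → ℕ) (i : Fin n) (m : ℕ) :
    deg (Function.update α i m) + α i = deg α + m := by
  unfold deg
  rw [Finset.sum_update_of_mem (Finset.mem_univ i)]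
  have h1 : ∑ j, α j = α i + ∑ j ∈ Finset.univ.erase i, α j :=
    (Finset.add_sum_erase _ _ (Finset.mem_univ i)).symm
  have h2 : ∑ j ∈ Finset.univ \ {i}, α j = ∑ j ∈ Finset.univ.erase i, α j := by
    rw [Finset.sdiff_singleton_eq_erase]
  omega

theorem eq_zero_of_deg_eq_zero {α : Fin n → ℕ} (h : deg α = 0) : α = fun _ => 0 := by
  funext j
  exact Finset.sum_eq_zero_iff.mp h j (Finset.mem_univ j)

def Dspan (E : SkewPBWExtension R A n x) (p : ℕ) : AddSubgroup A :=
  E.rSpan {y | ∃ α, deg α ≤ p ∧ y = mono x α}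

theorem Dspan_mono {p q : ℕ} (h : p ≤ q) : Dspan E p ≤ Dspan E q :=
  rSpan_mono E fun y ⟨α, hα, hy⟩ => ⟨α, hα.trans h, hy⟩

theorem mono_mem_Dspan {α : Fin n → ℕ} {p : ℕ} (h : deg α ≤ p) : mono x α ∈ Dspan E p :=
  mem_rSpan E ⟨α, h, rfl⟩

theorem smul_mono_mem_Dspan (r : R) {α : Fin n → ℕ} {p : ℕ} (h : deg α ≤ p) :
    E.ι r * mono x α ∈ Dspan E p :=
  mem_rSpan_mul E (show mono x α ∈ {y : A | ∃ β, deg β ≤ p ∧ y = mono x β} from ⟨α, h, rfl⟩) r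

theorem Dspan_isRStable (p : ℕ) : E.IsRStable (Dspan E p) := rSpan_isRStable E _

/-- If multiplication by `x j` maps monomials of degree `≤ p` into `Dspan (p+1)`,
then it maps all of `Dspan p` into `Dspan (p+1)`. -/
theorem x_mul_mem {j : Fin n} {p : ℕ}
    (hj : ∀ α : Fin n → ℕ, deg α ≤ p → x j * mono x α ∈ Dspan E (p + 1))
    {b : A} (hb : b ∈ Dspan E p) : x j * b ∈ Dspan E (p + 1) := by
  induction hb using AddSubgroup.closure_induction with
  | mem y hy =>
      obtain ⟨r, w, ⟨α, hα, rfl⟩, rfl⟩ := hy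
      by_cases hr : r = 0
      · simp only [hr, map_zero, zero_mul, mul_zero]
        exact AddSubgroup.zero_mem _
      · obtain ⟨c, -, r', hc⟩ := E.cond3 j r hr
        rw [← mul_assoc, hc, add_mul, mul_assoc]
        exact AddSubgroup.add_mem _
          (Dspan_isRStable E _ c _ (hj α hα))
          (smul_mono_mem_Dspan E r' (hα.trans (Nat.le_succ p)))
  | zero => simpa using AddSubgroup.zero_mem _
  | add a b _ _ ha hb => rw [mul_add]; exact AddSubgroup.add_mem _ ha hb
  | neg a _ ha => rw [mul_neg]; exact AddSubgroup.neg_mem _ ha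

/-- Key straightening lemma: `x i · x^α ∈ Dspan (p+1)` whenever `deg α ≤ p`. -/
theorem key : ∀ p : ℕ, ∀ iv : ℕ, ∀ i : Fin n, (i : ℕ) ≤ iv →
    ∀ α : Fin n → ℕ, deg α ≤ p → x i * mono x α ∈ Dspan E (p + 1) := by
  intro p
  induction p using Nat.strong_induction_on with
  | _ p ihp =>
  intro iv
  induction iv using Nat.strong_induction_on with
  | _ iv ihi =>
  intro i hiv α hα
  by_cases hlow : ∀ j, j < i → α j = 0
  · rw [x_mul_mono i α hlow]
    refine mono_mem_Dspan E ?_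
    have := deg_update_add α i (α i + 1)
    omega
  · push_neg at hlow
    obtain ⟨j₀, hj₀i, hj₀⟩ := hlow
    -- minimal index with nonzero exponent
    have hne : ({k | α k ≠ 0} : Set (Fin n)).toFinset.Nonempty :=
      ⟨j₀, Set.mem_toFinset.mpr hj₀⟩
    set j := ({k | α k ≠ 0} : Set (Fin n)).toFinset.min' hne with hjdef
    have hjmem : α j ≠ 0 := by
      have := Finset.min'_mem _ hne
      rwa [Set.mem_toFinset] at this
    have hjmin : ∀ k, k < j → α k = 0 := by
      intro k hk
      by_contra hk0
      exact absurd (Finset.min'_le _ k (by rwa [Set.mem_toFinset])) (not_le.mpr hk)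
    have hji : j < i := lt_of_le_of_lt (Finset.min'_le _ j₀ (by rwa [Set.mem_toFinset])) hj₀i
    set α' := Function.update α j (α j - 1) with hα'def
    have hαj : 1 ≤ α j := Nat.pos_of_ne_zero hjmem
    have hdegα' : deg α' + 1 ≤ p := by
      have hupd := deg_update_add α j (α j - 1)
      rw [← hα'def] at hupd
      omega
    have hp1 : 1 ≤ p := le_trans (by omega) hdegα'
    have hdecomp : mono x α = x j * mono x α' :=
      mono_decomp j α hjmin (Nat.pos_of_ne_zero hjmem)
    obtain ⟨c, -, r0, r', hc4⟩ := E.cond4 j i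
    -- x i * mono α = (x i * x j) * mono α'
    have hximonoα' : x i * mono x α' ∈ Dspan E p := by
      have := ihp (p - 1) (by omega) i i le_rfl α' (by omega)
      rwa [Nat.sub_add_cancel hp1] at this
    have hterm1 : E.ι c * (x j * (x i * mono x α')) ∈ Dspan E (p + 1) := by
      refine Dspan_isRStable E _ c _ ?_
      refine x_mul_mem E (fun β hβ => ?_) hximonoα'
      exact ihi (j : ℕ) (by omega) j le_rfl β hβ
    have hterm2 : E.ι r0 * mono x α' ∈ Dspan E (p + 1) :=
      smul_mono_mem_Dspan E r0 (by omega)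
    have hterm3 : ∀ k : Fin n, E.ι (r' k) * (x k * mono x α') ∈ Dspan E (p + 1) := by
      intro k
      refine Dspan_isRStable E _ _ _ ?_
      have := ihp (p - 1) (by omega) k k le_rfl α' (by omega)
      rw [Nat.sub_add_cancel hp1] at this
      exact (Dspan_mono E (Nat.le_succ p)) this
    have hexpand : x i * mono x α =
        E.ι c * (x j * (x i * mono x α')) + E.ι r0 * mono x α' +
          ∑ k, E.ι (r' k) * (x k * mono x α') := by
      rw [hdecomp, ← mul_assoc, hc4]
      rw [add_mul, add_mul, Finset.sum_mul]
      congr 1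
      · congr 1
        rw [mul_assoc, mul_assoc]
      · exact Finset.sum_congr rfl fun k _ => by rw [mul_assoc]
    rw [hexpand]
    exact AddSubgroup.add_mem _ (AddSubgroup.add_mem _ hterm1 hterm2)
      (AddSubgroup.sum_mem _ fun k _ => hterm3 k)

theorem x_mul_Dspan {i : Fin n} {p : ℕ} {b : A} (hb : b ∈ Dspan E p) :
    x i * b ∈ Dspan E (p + 1) :=
  x_mul_mem E (fun α hα => key E p i i le_rfl α hα) hb

theorem mono_mul_Dspan : ∀ (d : ℕ) (α : Fin n → ℕ), deg α = d → ∀ {q : ℕ} {b : A},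
    b ∈ Dspan E q → mono x α * b ∈ Dspan E (q + d) := by
  intro d
  induction d with
  | zero =>
      intro α hα q b hb
      rw [eq_zero_of_deg_eq_zero hα]
      have : mono x (fun _ => 0) = (1 : A) := mono_zero_exp
      rw [this, one_mul]
      exact hb
  | succ d ih =>
      intro α hα q b hb
      have hne : ∃ j₀, α j₀ ≠ 0 := by
        by_contra hc
        push_neg at hc
        have : deg α = 0 := Finset.sum_eq_zero fun j _ => hc j
        omega
      obtain ⟨j₀, hj₀⟩ := hne
      have hnefs : ({k | α k ≠ 0} : Set (Fin n)).toFinset.Nonempty :=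
        ⟨j₀, Set.mem_toFinset.mpr hj₀⟩
      set j := ({k | α k ≠ 0} : Set (Fin n)).toFinset.min' hnefs with hjdef
      have hjmem : α j ≠ 0 := by
        have := Finset.min'_mem _ hnefs
        rwa [Set.mem_toFinset] at this
      have hjmin : ∀ k, k < j → α k = 0 := by
        intro k hk
        by_contra hk0
        exact absurd (Finset.min'_le _ k (by rwa [Set.mem_toFinset])) (not_le.mpr hk)
      set α' := Function.update α j (α j - 1) with hα'def
      have hαj : 1 ≤ α j := Nat.pos_of_ne_zero hjmem
      have hdegα' : deg α' = d := by
        have hupd := deg_update_add α j (α j - 1)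
        rw [← hα'def] at hupd
        omega
      rw [mono_decomp j α hjmin (Nat.pos_of_ne_zero hjmem), mul_assoc]
      have h1 : mono x α' * b ∈ Dspan E (q + d) := ih α' hdegα' hb
      exact x_mul_Dspan E (i := j) h1

theorem Dspan_mul {p q : ℕ} {a b : A} (ha : a ∈ Dspan E p) (hb : b ∈ Dspan E q) :
    a * b ∈ Dspan E (p + q) := by
  induction ha using AddSubgroup.closure_induction with
  | mem y hy =>
      obtain ⟨r, w, ⟨α, hα, rfl⟩, rfl⟩ := hy
      rw [mul_assoc]
      refine Dspan_isRStable E _ r _ ?_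
      have := mono_mul_Dspan E (deg α) α rfl hb
      exact Dspan_mono E (by omega) this
  | zero => simpa using AddSubgroup.zero_mem _
  | add a b _ _ ha hb => rw [add_mul]; exact AddSubgroup.add_mem _ ha hb
  | neg a _ ha => rw [neg_mul]; exact AddSubgroup.neg_mem _ ha

theorem exists_mem_Dspan (a : A) : ∃ p, a ∈ Dspan E p := by
  obtain ⟨c, hc⟩ : ∃ c : (Fin n → ℕ) →₀ R, a = c.sum fun α r => E.ι r * mono x α :=
    ⟨_, coord_spec E a⟩
  refine ⟨c.support.sup deg, ?_⟩
  rw [hc]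
  exact AddSubgroup.sum_mem _ fun α hα => smul_mono_mem_Dspan E _ (Finset.le_sup hα)


/-! ### Ore condition and dependence over a noetherian domain -/

section Noeth
variable [IsDomain R] [IsNoetherianRing R]

theorem ore (a b : R) (ha : a ≠ 0) (hb : b ≠ 0) :
    ∃ s t : R, s * a = t * b ∧ s * a ≠ 0 := by
  by_contra hcon
  push_neg at hcon
  -- independence of a, ab, ab², …
  have indep : ∀ k : ℕ, ∀ r : Fin (k + 1) → R,
      ∑ i, r i * (a * b ^ (i : ℕ)) = 0 → ∀ i, r i = 0 := by
    intro k
    induction k with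
    | zero =>
        intro r hr i
        have h0 : r 0 * a = 0 := by simpa using hr
        have h1 : r 0 = 0 := (mul_eq_zero.mp h0).resolve_right ha
        fin_cases i
        exact h1
    | succ k ih =>
        intro r hr
        rw [Fin.sum_univ_succ] at hr
        have hexp : ∀ i : Fin (k + 1), r i.succ * (a * b ^ (i.succ : ℕ)) =
            (r i.succ * (a * b ^ (i : ℕ))) * b := by
          intro i
          rw [Fin.val_succ, pow_succ, mul_assoc, mul_assoc]
        rw [Finset.sum_congr rfl (fun i _ => hexp i), ← Finset.sum_mul] at hr
        set S := ∑ i : Fin (k + 1), r i.succ * (a * b ^ (i : ℕ)) with hS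
        have hr' : r 0 * a + S * b = 0 := by simpa using hr
        have h0 : r 0 * a = (-S) * b := by
          rw [neg_mul]
          exact eq_neg_of_add_eq_zero_left hr'
        have hr0 : r 0 * a = 0 := hcon (r 0) (-S) h0
        have hr0' : r 0 = 0 := (mul_eq_zero.mp hr0).resolve_right ha
        have hSb : S * b = 0 := by
          rw [hr0', zero_mul, zero_add] at hr'
          exact hr'
        have hS0 : S = 0 := (mul_eq_zero.mp hSb).resolve_right hb
        have hrest := ih (fun i => r i.succ) hS0
        intro i
        rcases Fin.eq_zero_or_eq_succ i with h | ⟨j, rfl⟩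
        · rwa [h]
        · exact hrest j
  -- the chain of spans
  set g : ℕ → Submodule R R := fun k =>
    Submodule.span R (Set.range fun i : Fin (k + 1) => a * b ^ (i : ℕ)) with hg
  have gmono : Monotone g := by
    intro p q hpq
    refine Submodule.span_mono ?_
    rintro y ⟨i, rfl⟩
    exact ⟨⟨i, by omega⟩, rfl⟩
  obtain ⟨N, hN⟩ := monotone_stabilizes_iff_noetherian.mpr inferInstance ⟨g, gmono⟩
  have hmem : a * b ^ (N + 1) ∈ g N := by
    have : a * b ^ (N + 1) ∈ g (N + 1) :=
      Submodule.subset_span ⟨⟨N + 1, by omega⟩, rfl⟩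
    have hgN : g N = g (N + 1) := hN (N + 1) (Nat.le_succ N)
    rwa [← hgN] at this
  obtain ⟨c, hc⟩ := (Submodule.mem_span_range_iff_exists_fun R).mp hmem
  -- build a dependence with last coefficient -1
  set r : Fin (N + 2) → R := Fin.snoc (fun i : Fin (N+1) => c i) (-1) with hrdef
  have hrsum : ∑ i : Fin (N + 2), r i * (a * b ^ (i : ℕ)) = 0 := by
    rw [Fin.sum_univ_castSucc]
    have h1 : ∀ i : Fin (N + 1), r i.castSucc = c i := by
      intro i; simp [hrdef]
    have h2 : r (Fin.last (N + 1)) = -1 := by simp [hrdef]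
    have h3 : ∑ i : Fin (N + 1), r i.castSucc * (a * b ^ (i.castSucc : ℕ)) =
        ∑ i : Fin (N + 1), c i * (a * b ^ (i : ℕ)) := by
      refine Finset.sum_congr rfl fun i _ => ?_
      rw [h1]
      rfl
    rw [h3, h2]
    have h4 : ∑ i : Fin (N + 1), c i * (a * b ^ (i : ℕ)) = a * b ^ (N + 1) := by
      rw [← hc]
      simp [smul_eq_mul]
    rw [h4]
    simp [Fin.val_last]
  have := indep (N + 1) r hrsum (Fin.last (N + 1))
  rw [show r (Fin.last (N + 1)) = -1 by simp [hrdef]] at this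
  exact absurd (neg_eq_zero.mp this) one_ne_zero

theorem exists_dep {ix : Type*} [DecidableEq ix] (S : Finset ix) :
    ∀ k : ℕ, S.card < k → ∀ u : Fin k → (ix →₀ R),
      (∀ i, (u i).support ⊆ S) →
      ∃ c : Fin k → R, (∃ i, c i ≠ 0) ∧ ∑ i, c i • u i = 0 := by
  induction S using Finset.induction_on with
  | empty =>
      intro k hk u hu
      have hz : ∀ i, u i = 0 := fun i =>
        Finsupp.support_eq_empty.mp (Finset.subset_empty.mp (hu i))
      exact ⟨fun _ => 1, ⟨⟨0, hk⟩, one_ne_zero⟩, by simp [hz]⟩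
  | @insert a S' hae ih =>
      intro k hk u hu
      have hcard : S'.card + 1 = (insert a S').card := (Finset.card_insert_of_notMem hae).symm
      by_cases hall : ∀ i, u i a = 0
      · refine ih k (by omega) u fun i => ?_
        intro β hβ
        have h1 := hu i hβ
        rcases Finset.mem_insert.mp h1 with h | h
        · exfalso
          apply Finsupp.mem_support_iff.mp hβ
          rw [h]
          exact hall i
        · exact h
      · push_neg at hall
        obtain ⟨i0, hi0⟩ := hall
        obtain ⟨k', rfl⟩ : ∃ k', k = k' + 1 := ⟨k - 1, by omega⟩
        have hst : ∀ i : Fin (k' + 1), ∃ st : R × R,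
            st.1 * (u i a) = st.2 * (u i0 a) ∧ st.1 ≠ 0 := by
          intro i
          by_cases h : u i a = 0
          · exact ⟨(1, 0), by simp [h], one_ne_zero⟩
          · obtain ⟨s, t, hst, hsne⟩ := ore (u i a) (u i0 a) h hi0
            exact ⟨(s, t), hst, left_ne_zero_of_mul hsne⟩
        choose st hst1 hst2 using hst
        set w : Fin (k' + 1) → (ix →₀ R) :=
          fun i => (st i).1 • u i - (st i).2 • u i0 with hw
        have hwa : ∀ i, w i a = 0 := by
          intro i
          simp only [hw, Finsupp.sub_apply, Finsupp.smul_apply, smul_eq_mul]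
          rw [hst1 i]
          exact sub_self _
        have hwsupp : ∀ j : Fin k', (w (i0.succAbove j)).support ⊆ S' := by
          intro j β hβ
          have h1 : β ∈ (insert a S' : Finset ix) := by
            have hsub : (w (i0.succAbove j)).support ⊆
                ((st (i0.succAbove j)).1 • u (i0.succAbove j)).support ∪
                ((st (i0.succAbove j)).2 • u i0).support := by
              rw [hw]
              exact Finsupp.support_sub (ι := ix)
            have h2 := hsub hβ
            rcases Finset.mem_union.mp h2 with h | h
            · exact hu _ (Finsupp.support_smul h)
            · exact hu _ (Finsupp.support_smul h)
          rcases Finset.mem_insert.mp h1 with h | h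
          · exfalso
            apply Finsupp.mem_support_iff.mp hβ
            rw [h]
            exact hwa _
          · exact h
        obtain ⟨c', ⟨j₁, hj₁⟩, hcsum⟩ :=
          ih k' (by omega) (fun j => w (i0.succAbove j)) hwsupp
        -- expand the dependence
        have hexp : ∑ j : Fin k', ((c' j * (st (i0.succAbove j)).1) • u (i0.succAbove j))
            = (∑ j : Fin k', c' j * (st (i0.succAbove j)).2) • u i0 := by
          have h1 : ∀ j : Fin k', c' j • w (i0.succAbove j) =
              (c' j * (st (i0.succAbove j)).1) • u (i0.succAbove j) -
              (c' j * (st (i0.succAbove j)).2) • u i0 := by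
            intro j
            rw [hw]
            rw [smul_sub, smul_smul, smul_smul]
          rw [Finset.sum_congr rfl (fun j _ => h1 j), Finset.sum_sub_distrib] at hcsum
          rw [← Finset.sum_smul] at hcsum
          exact sub_eq_zero.mp hcsum
        refine ⟨i0.insertNth (α := fun _ => R)
            (-(∑ j : Fin k', c' j * (st (i0.succAbove j)).2))
            (fun j => c' j * (st (i0.succAbove j)).1), ⟨i0.succAbove j₁, ?_⟩, ?_⟩
        · simp only [Fin.insertNth_apply_succAbove]
          exact mul_ne_zero hj₁ (hst2 _)
        · rw [Fin.sum_univ_succAbove _ i0]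
          simp only [Fin.insertNth_apply_same, Fin.insertNth_apply_succAbove]
          rw [hexp, neg_smul]
          exact neg_add_cancel _

end Noeth

theorem exists_ne_zero_of_ne_bot {M : Type*} [AddCommGroup M] {W : AddSubgroup M}
    (h : W ≠ ⊥) : ∃ a ∈ W, a ≠ 0 := by
  by_contra hc
  push_neg at hc
  exact h (by
    ext a
    simp only [AddSubgroup.mem_bot]
    exact ⟨fun ha => hc a ha, fun ha => ha ▸ W.zero_mem⟩)

/-- coord as an additive monoid hom -/
noncomputable def coordHom (E : SkewPBWExtension R A n x) : A →+ ((Fin n → ℕ) →₀ R) :=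
  AddMonoidHom.mk' (coord E) (coord_add E)

theorem mono_ne_zero [Nontrivial R] (E : SkewPBWExtension R A n x) (α : Fin n → ℕ) :
    mono x α ≠ 0 := by
  intro h
  have h1 : coord E (mono x α) = Finsupp.single α 1 := by
    have := coord_single E 1 α
    rwa [map_one, one_mul] at this
  rw [h, coord_zero] at h1
  refine (one_ne_zero : (1 : R) ≠ 0) ?_
  have := congrFun (congrArg DFunLike.coe h1) α
  simpa using this.symm

/-- the cyclic subgroup `R·x^α` -/
def Rx (E : SkewPBWExtension R A n x) (α : Fin n → ℕ) : AddSubgroup A :=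
  E.rSpan {mono x α}

theorem Rx_ne_bot [Nontrivial R] (E : SkewPBWExtension R A n x) (α : Fin n → ℕ) :
    Rx E α ≠ ⊥ := by
  intro h
  have h1 : mono x α ∈ Rx E α := mem_rSpan E rfl
  rw [h, AddSubgroup.mem_bot] at h1
  exact mono_ne_zero E α h1

theorem Rx_coord_support (E : SkewPBWExtension R A n x) {α : Fin n → ℕ} {a : A}
    (ha : a ∈ Rx E α) : ↑(coord E a).support ⊆ ({α} : Set (Fin n → ℕ)) := by
  refine coord_support_subset E ?_
  have : ({mono x α} : Set A) = {y | ∃ β ∈ ({α} : Set (Fin n → ℕ)), y = mono x β} := by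
    ext y
    simp
  rw [Rx, this] at ha
  exact ha

theorem mem_of_le_rSpan_monos (E : SkewPBWExtension R A n x) {T : Set (Fin n → ℕ)} {a : A}
    (ha : a ∈ E.rSpan {y | ∃ β ∈ T, y = mono x β}) : ↑(coord E a).support ⊆ T :=
  coord_support_subset E ha

section Noeth2
variable [IsDomain R] [IsNoetherianRing R]

/-- Any independent family of nonzero `R`-stable subgroups inside the span of
the monomials indexed by `T` has at most `T.card` members. -/
theorem card_le_of_indep {W : AddSubgroup A} {T : Finset (Fin n → ℕ)}
    (hW : W ≤ E.rSpan {y | ∃ β ∈ (↑T : Set (Fin n → ℕ)), y = mono x β}) {m : ℕ}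
    (f : Fin m → AddSubgroup A) (h1 : ∀ i, f i ≠ ⊥) (h2 : ∀ i, f i ≤ W)
    (h3 : ∀ i, E.IsRStable (f i)) (h4 : iSupIndep f) : m ≤ T.card := by
  by_contra hcon
  push_neg at hcon
  choose u hu hune using fun i => exists_ne_zero_of_ne_bot (h1 i)
  have hsupp : ∀ i, (coord E (u i)).support ⊆ T := by
    intro i
    have := mem_of_le_rSpan_monos E (hW (h2 i (hu i)))
    exact_mod_cast Finset.coe_subset.mpr (by exact_mod_cast this)
  obtain ⟨c, ⟨i₁, hi₁⟩, hsum⟩ := exists_dep T m hcon (fun i => coord E (u i)) hsupp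
  -- the combination is zero
  have hcomb : ∑ i, E.ι (c i) * u i = 0 := by
    apply eq_zero_of_coord_eq_zero E
    have : coord E (∑ i, E.ι (c i) * u i) = ∑ i, coord E (E.ι (c i) * u i) :=
      map_sum (coordHom E) _ _
    rw [this]
    rw [Finset.sum_congr rfl fun i _ => coord_smul E (c i) (u i)]
    exact hsum
  -- independence forces each term to vanish
  have hterm : ∀ i, E.ι (c i) * u i = 0 := by
    intro i
    have hmemi : E.ι (c i) * u i ∈ f i := h3 i (c i) _ (hu i)
    have hmemsup : E.ι (c i) * u i ∈ ⨆ j, ⨆ (_ : j ≠ i), f j := by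
      have hsum2 : E.ι (c i) * u i + ∑ j ∈ Finset.univ.erase i, E.ι (c j) * u j = 0 := by
        rw [Finset.add_sum_erase Finset.univ (fun j => E.ι (c j) * u j) (Finset.mem_univ i)]
        exact hcomb
      rw [eq_neg_of_add_eq_zero_left hsum2]
      refine AddSubgroup.neg_mem _ (AddSubgroup.sum_mem _ fun j hj => ?_)
      have hji : j ≠ i := Finset.ne_of_mem_erase hj
      have hle : f j ≤ ⨆ j, ⨆ (_ : j ≠ i), f j :=
        le_iSup₂ (f := fun j (_ : j ≠ i) => f j) j hji
      exact hle (h3 j (c j) _ (hu j))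
    have := (h4 i).le_bot (AddSubgroup.mem_inf.mpr ⟨hmemi, hmemsup⟩)
    simpa using this
  -- contradiction with c i₁ ≠ 0
  have h0 : c i₁ • coord E (u i₁) = 0 := by
    rw [← coord_smul E (c i₁) (u i₁), hterm i₁, coord_zero]
  have hU : coord E (u i₁) ≠ 0 := fun h => hune i₁ (eq_zero_of_coord_eq_zero E h)
  obtain ⟨β, hβ⟩ : ∃ β, coord E (u i₁) β ≠ 0 := by
    by_contra hall
    push_neg at hall
    exact hU (Finsupp.ext hall)
  have : c i₁ * coord E (u i₁) β = 0 := by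
    have := congrFun (congrArg DFunLike.coe h0) β
    simpa using this
  rcases mul_eq_zero.mp this with h | h
  · exact hi₁ h
  · exact hβ h

/-- upper bound on the udim of a subgroup inside a monomial span -/
theorem udim_le_card {W : AddSubgroup A} {T : Finset (Fin n → ℕ)}
    (hW : W ≤ E.rSpan {y | ∃ β ∈ (↑T : Set (Fin n → ℕ)), y = mono x β}) :
    E.udim W ≤ T.card := by
  refine csSup_le ⟨0, Fin.elim0, fun i => i.elim0, fun i => i.elim0, fun i => i.elim0,
    fun i => i.elim0⟩ ?_
  rintro m ⟨f, h1, h2, h3, h4⟩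
  exact card_le_of_indep E hW f h1 h2 h3 h4

/-- lower bound: if monomials indexed by `T'` lie in a stable `W` bounded above
by a monomial span, then `udim W ≥ T'.card`. -/
theorem card_le_udim {W : AddSubgroup A} {T T' : Finset (Fin n → ℕ)}
    (hWst : E.IsRStable W)
    (hW : W ≤ E.rSpan {y | ∃ β ∈ (↑T : Set (Fin n → ℕ)), y = mono x β})
    (hT' : ∀ α ∈ T', mono x α ∈ W) : T'.card ≤ E.udim W := by
  classical
  set e := T'.equivFin with he
  set f : Fin T'.card → AddSubgroup A := fun i => Rx E ((e.symm i) : Fin n → ℕ) with hf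
  have hmem : T'.card ∈ {m : ℕ | ∃ f : Fin m → AddSubgroup A, (∀ i, f i ≠ ⊥) ∧
      (∀ i, f i ≤ W) ∧ (∀ i, E.IsRStable (f i)) ∧ iSupIndep f} := by
    refine ⟨f, fun i => Rx_ne_bot E _, fun i => ?_, fun i => rSpan_isRStable E _, ?_⟩
    · refine rSpan_le E hWst ?_
      intro y hy
      rw [Set.mem_singleton_iff.mp hy]
      exact hT' _ (e.symm i).2
    · intro i
      rw [AddSubgroup.disjoint_def]
      intro a hai hasup
      -- a has coord support in {α_i} and in T' \ {α_i}
      have hs1 := Rx_coord_support E hai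
      have hs2 : ↑(coord E a).support ⊆ ((↑T' : Set (Fin n → ℕ)) \ {(e.symm i : Fin n → ℕ)}) := by
        refine mem_of_le_rSpan_monos E ?_
        have hle : (⨆ j, ⨆ (_ : j ≠ i), f j) ≤
            E.rSpan {y | ∃ β ∈ ((↑T' : Set (Fin n → ℕ)) \ {(e.symm i : Fin n → ℕ)}), y = mono x β} := by
          refine iSup₂_le fun j hj => ?_
          refine rSpan_le E (rSpan_isRStable E _) ?_
          intro y hy
          rw [Set.mem_singleton_iff.mp hy]
          refine mem_rSpan E ⟨(e.symm j : Fin n → ℕ), ⟨(e.symm j).2, ?_⟩, rfl⟩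
          intro hcontra
          have : e.symm j = e.symm i := Subtype.ext (by simpa using hcontra)
          exact hj (e.symm.injective this)
        exact hle hasup
      have hsupp0 : (coord E a).support = ∅ := by
        by_contra hne
        obtain ⟨β, hβ⟩ := Finset.nonempty_of_ne_empty hne
        have hb1 := hs1 (Finset.mem_coe.mpr hβ)
        have hb2 := hs2 (Finset.mem_coe.mpr hβ)
        rw [Set.mem_singleton_iff] at hb1
        exact hb2.2 (by rw [hb1]; rfl)
      exact eq_zero_of_coord_eq_zero E (Finsupp.support_eq_empty.mp hsupp0)
  refine le_csSup ⟨T.card, ?_⟩ hmem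
  rintro m ⟨g, h1, h2, h3, h4⟩
  exact card_le_of_indep E hW g h1 h2 h3 h4

end Noeth2

/-! ### the standard frame -/

variable (x) in
/-- the standard frame `(1, x_0, …, x_{n-1})` -/
def v0 : Fin (n + 1) → A := Fin.cons 1 x

/-- the exponent tuple of `v0 i` -/
def αof (n : ℕ) : Fin (n + 1) → (Fin n → ℕ) :=
  Fin.cons (fun _ => 0) (fun j => Function.update (fun _ => 0) j 1)

theorem v0_eq_mono (i : Fin (n + 1)) : v0 x i = mono x (αof n i) := by
  induction i using Fin.cases with
  | zero => simp only [v0, αof, Fin.cons_zero]; exact mono_zero_exp.symm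
  | succ j =>
      simp only [v0, αof, Fin.cons_succ]
      have h := x_mul_mono (x := x) j (fun _ => 0) (fun _ _ => rfl)
      rw [mono_zero_exp, mul_one] at h
      exact h

theorem αof_injective : Function.Injective (αof n) := by
  intro i i' h
  induction i using Fin.cases with
  | zero =>
      induction i' using Fin.cases with
      | zero => rfl
      | succ j =>
          exfalso
          have := congrFun h j
          simp [αof] at this
  | succ j =>
      induction i' using Fin.cases with
      | zero =>
          exfalso
          have := congrFun h j
          simp [αof] at this
      | succ j' =>
          congr 1
          by_contra hne
          have := congrFun h j
          simp [αof, Function.update_apply] at this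
          exact hne this

theorem isFrame_v0 : E.IsFrame (v0 x) := by
  constructor
  · intro c c' hcc
    have key : ∀ c : Fin (n + 1) → R, coord E (∑ i, E.ι (c i) * v0 x i) =
        ∑ i, Finsupp.single (αof n i) (c i) := by
      intro c
      have hmap : coord E (∑ i, E.ι (c i) * v0 x i) = ∑ i, coord E (E.ι (c i) * v0 x i) :=
        map_sum (coordHom E) _ _
      rw [hmap]
      refine Finset.sum_congr rfl fun i _ => ?_
      rw [v0_eq_mono, coord_single]
    funext i
    have h1 := congrFun (congrArg DFunLike.coe ((key c).symm.trans ((congrArg (coord E) hcc).trans (key c')))) (αof n i)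
    have heval : ∀ c : Fin (n + 1) → R,
        (∑ i', Finsupp.single (αof n i') (c i') : (Fin n → ℕ) →₀ R) (αof n i) = c i := by
      intro c
      rw [Finset.sum_apply']
      rw [Finset.sum_eq_single i]
      · rw [Finsupp.single_apply, if_pos rfl]
      · intro j _ hji
        rw [Finsupp.single_apply, if_neg (fun hc => hji (αof_injective hc))]
      · intro hi
        exact absurd (Finset.mem_univ i) hi
    rwa [heval, heval] at h1
  · exact mem_rSpan E ⟨0, rfl⟩

theorem mono_mem_framePow (m : ℕ) (α : Fin n → ℕ) (hα : deg α ≤ m) :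
    mono x α ∈ E.framePow (v0 x) m := by
  suffices h : ∃ w : Fin m → A, (∀ j, w j ∈ E.rSpan (Set.range (v0 x))) ∧
      mono x α = (List.ofFn w).prod by
    obtain ⟨w, hw, hprod⟩ := h
    exact mem_rSpan E ⟨w, hw, hprod⟩
  induction m generalizing α with
  | zero =>
      refine ⟨Fin.elim0, fun j => j.elim0, ?_⟩
      have : deg α = 0 := Nat.le_zero.mp hα
      rw [eq_zero_of_deg_eq_zero this, mono_zero_exp]
      simp
  | succ m ih =>
      by_cases h0 : deg α = 0
      · refine ⟨fun _ => 1, fun j => mem_rSpan E ⟨0, rfl⟩, ?_⟩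
        rw [eq_zero_of_deg_eq_zero h0, mono_zero_exp]
        refine (List.prod_eq_one fun a ha => ?_).symm
        obtain ⟨i, rfl⟩ := List.mem_ofFn.mp ha
        rfl
      · -- decompose at the minimal nonzero index
        have hne : ∃ j₀, α j₀ ≠ 0 := by
          by_contra hc
          push_neg at hc
          exact h0 (Finset.sum_eq_zero fun j _ => hc j)
        obtain ⟨j₀, hj₀⟩ := hne
        have hnefs : ({k | α k ≠ 0} : Set (Fin n)).toFinset.Nonempty :=
          ⟨j₀, Set.mem_toFinset.mpr hj₀⟩
        set j := ({k | α k ≠ 0} : Set (Fin n)).toFinset.min' hnefs with hjdef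
        have hjmem : α j ≠ 0 := by
          have := Finset.min'_mem _ hnefs
          rwa [Set.mem_toFinset] at this
        have hjmin : ∀ k, k < j → α k = 0 := by
          intro k hk
          by_contra hk0
          exact absurd (Finset.min'_le _ k (by rwa [Set.mem_toFinset])) (not_le.mpr hk)
        set α' := Function.update α j (α j - 1) with hα'def
        have hαj : 1 ≤ α j := Nat.pos_of_ne_zero hjmem
        have hdegα' : deg α' ≤ m := by
          have hupd := deg_update_add α j (α j - 1)
          rw [← hα'def] at hupd
          omega
        obtain ⟨w', hw', hprod'⟩ := ih α' hdegα'
        refine ⟨Fin.cons (x j) w', fun i => ?_, ?_⟩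
        · induction i using Fin.cases with
          | zero =>
              rw [Fin.cons_zero]
              refine mem_rSpan E ⟨j.succ, ?_⟩
              simp [v0]
          | succ i' => rw [Fin.cons_succ]; exact hw' i'
        · rw [mono_decomp j α hjmin hαj, List.ofFn_succ]
          simp only [Fin.cons_zero, Fin.cons_succ, List.prod_cons]
          rw [← hα'def, ← hprod']

theorem v0_mem_Dspan_one (i : Fin (n + 1)) : v0 x i ∈ Dspan E 1 := by
  rw [v0_eq_mono]
  refine mono_mem_Dspan E ?_
  induction i using Fin.cases with
  | zero =>
      simp only [αof, Fin.cons_zero]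
      have : deg (fun _ => 0 : Fin n → ℕ) = 0 := Finset.sum_eq_zero fun j _ => rfl
      omega
  | succ j =>
      simp only [αof, Fin.cons_succ]
      have h0 : deg (fun _ => 0 : Fin n → ℕ) = 0 := Finset.sum_eq_zero fun j _ => rfl
      have := deg_update_add (fun _ => 0 : Fin n → ℕ) j 1
      omega

theorem listProd_mem_Dspan (d : ℕ) : ∀ (m : ℕ) (w : Fin m → A),
    (∀ j, w j ∈ Dspan E d) → (List.ofFn w).prod ∈ Dspan E (d * m) := by
  intro m
  induction m with
  | zero =>
      intro w hw
      simp only [List.ofFn_zero, List.prod_nil]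
      have h1 : (1 : A) = mono x (fun _ => 0) := mono_zero_exp.symm
      rw [h1]
      refine mono_mem_Dspan E ?_
      have : deg (fun _ => 0 : Fin n → ℕ) = 0 := Finset.sum_eq_zero fun j _ => rfl
      omega
  | succ m ih =>
      intro w hw
      rw [List.ofFn_succ, List.prod_cons]
      have h1 := Dspan_mul E (hw 0) (ih (fun i => w i.succ) (fun i => hw i.succ))
      have : d + d * m = d * (m + 1) := by ring
      rwa [this] at h1

theorem framePow_le_Dspan {k : ℕ} (v : Fin k → A) (d : ℕ)
    (hv : ∀ i, v i ∈ Dspan E d) (m : ℕ) : E.framePow v m ≤ Dspan E (d * m) := by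
  refine rSpan_le E (Dspan_isRStable E _) ?_
  rintro y ⟨w, hw, rfl⟩
  refine listProd_mem_Dspan E d m w fun j => ?_
  refine rSpan_le E (Dspan_isRStable E _) ?_ (hw j)
  rintro y' ⟨i, rfl⟩
  exact hv i

/-! ### boxes of exponents -/

/-- the box of exponent tuples with all entries `≤ p` -/
def box (n p : ℕ) : Finset (Fin n → ℕ) := Fintype.piFinset fun _ => Finset.range (p + 1)

theorem card_box (p : ℕ) : (box n p).card = (p + 1) ^ n := by
  rw [box, Fintype.card_piFinset]
  simp

theorem mem_box_of_deg_le {α : Fin n → ℕ} {p : ℕ} (h : deg α ≤ p) : α ∈ box n p := by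
  rw [box, Fintype.mem_piFinset]
  intro i
  rw [Finset.mem_range]
  have : α i ≤ deg α := Finset.single_le_sum (f := α) (fun k _ => Nat.zero_le _) (Finset.mem_univ i)
  omega

theorem deg_le_of_mem_box {α : Fin n → ℕ} {p : ℕ} (h : α ∈ box n p) : deg α ≤ n * p := by
  rw [box, Fintype.mem_piFinset] at h
  refine le_trans (Finset.sum_le_card_nsmul Finset.univ α p fun i _ => ?_) (by simp)
  have := h i
  rw [Finset.mem_range] at this
  omega

theorem Dspan_le_box_span (p : ℕ) :
    Dspan E p ≤ E.rSpan {y | ∃ β ∈ (↑(box n p) : Set (Fin n → ℕ)), y = mono x β} := by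
  refine rSpan_mono E ?_
  rintro y ⟨α, hα, rfl⟩
  exact ⟨α, mem_box_of_deg_le hα, rfl⟩

section Noeth3
variable [IsDomain R] [IsNoetherianRing R]

/-- general upper bound for a frame contained in `Dspan d` -/
theorem udim_framePow_le {k : ℕ} (v : Fin k → A) (d : ℕ)
    (hv : ∀ i, v i ∈ Dspan E d) (m : ℕ) :
    E.udim (E.framePow v m) ≤ (d * m + 1) ^ n := by
  have h1 := (framePow_le_Dspan E v d hv m).trans (Dspan_le_box_span E (d * m))
  have := udim_le_card E h1
  rwa [card_box] at this

/-- lower bound for the standard frame -/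
theorem udim_framePow_v0_ge (hn : 0 < n) (m : ℕ) :
    (m / n + 1) ^ n ≤ E.udim (E.framePow (v0 x) m) := by
  have hub := (framePow_le_Dspan E (v0 x) 1 (v0_mem_Dspan_one E) m).trans
    (Dspan_le_box_span E (1 * m))
  have hlb : ∀ α ∈ box n (m / n), mono x α ∈ E.framePow (v0 x) m := by
    intro α hα
    refine mono_mem_framePow E m α ?_
    have := deg_le_of_mem_box hα
    have h2 : n * (m / n) ≤ m := by
      rw [Nat.mul_comm]
      exact Nat.div_mul_le_self m n
    omega
  have := card_le_udim E (rSpan_isRStable E _) hub hlb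
  rwa [card_box] at this

end Noeth3


open Filter Real


theorem lognat_mono {a b : ℕ} (h : a ≤ b) : Real.log a ≤ Real.log b := by
  rcases Nat.eq_zero_or_pos a with ha | ha
  · subst ha
    simp only [Nat.cast_zero, Real.log_zero]
    rcases Nat.eq_zero_or_pos b with hb | hb
    · subst hb; simp
    · exact Real.log_nonneg (by exact_mod_cast hb)
  · exact Real.log_le_log (by exact_mod_cast ha) (by exact_mod_cast h)

theorem tendsto_c_div_log (c : ℝ) :
    Tendsto (fun m : ℕ => c / Real.log m) atTop (nhds 0) :=
  Tendsto.div_atTop tendsto_const_nhds (Real.tendsto_log_atTop.comp tendsto_natCast_atTop_atTop)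

theorem tendsto_log_ratio (a b : ℝ) (ha : 0 < a) :
    Tendsto (fun m : ℕ => Real.log (a * m + b) / Real.log m) atTop (nhds 1) := by
  have t1 : Tendsto (fun m : ℕ => a + b / m) atTop (nhds a) := by
    have : Tendsto (fun m : ℕ => b / m) atTop (nhds 0) :=
      Tendsto.div_atTop tendsto_const_nhds tendsto_natCast_atTop_atTop
    simpa using tendsto_const_nhds.add this
  have t2 : Tendsto (fun m : ℕ => Real.log (a + b / m)) atTop (nhds (Real.log a)) :=
    ((Real.continuousAt_log (ne_of_gt ha)).tendsto).comp t1
  have t3 : Tendsto (fun m : ℕ => Real.log (a + b / m) / Real.log m) atTop (nhds 0) :=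
    Tendsto.div_atTop t2 (Real.tendsto_log_atTop.comp tendsto_natCast_atTop_atTop)
  have t4 : Tendsto (fun m : ℕ => 1 + Real.log (a + b / m) / Real.log m) atTop (nhds 1) := by
    simpa using tendsto_const_nhds.add t3
  refine t4.congr' ?_
  have hev : ∀ᶠ m : ℕ in atTop, 2 ≤ m ∧ 0 < a + b / (m : ℝ) :=
    (eventually_ge_atTop 2).and (t1.eventually (eventually_gt_nhds ha))
  filter_upwards [hev] with m ⟨hm2, hmpos⟩
  have hm0 : (0 : ℝ) < m := by positivity
  have hlogm : Real.log m ≠ 0 := by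
    refine ne_of_gt (Real.log_pos ?_)
    exact_mod_cast hm2
  have hsplit : a * m + b = m * (a + b / m) := by
    field_simp
  rw [hsplit, Real.log_mul (ne_of_gt hm0) (ne_of_gt hmpos)]
  field_simp

theorem tendsto_log_sub_ratio (c : ℝ) :
    Tendsto (fun m : ℕ => (Real.log m - c) / Real.log m) atTop (nhds 1) := by
  have t3 := tendsto_c_div_log c
  have t4 : Tendsto (fun m : ℕ => 1 - c / Real.log m) atTop (nhds 1) := by
    simpa using tendsto_const_nhds.sub t3
  refine t4.congr' ?_
  filter_upwards [eventually_ge_atTop 2] with m hm2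
  have hlogm : Real.log m ≠ 0 := ne_of_gt (Real.log_pos (by exact_mod_cast hm2))
  field_simp

theorem limsup_coe_eq {f : ℕ → ℝ} {a : ℝ} (h : Tendsto f atTop (nhds a)) :
    Filter.limsup (fun m : ℕ => ((f m : ℝ) : EReal)) atTop = ((a : ℝ) : EReal) :=
  Tendsto.limsup_eq ((continuous_coe_real_ereal.continuousAt).tendsto.comp h)

theorem limsup_coe_squeeze {f g h : ℕ → ℝ} {a : ℝ}
    (hg : Tendsto g atTop (nhds a)) (hh : Tendsto h atTop (nhds a))
    (h1 : ∀ᶠ m in atTop, g m ≤ f m) (h2 : ∀ᶠ m in atTop, f m ≤ h m) :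
    Filter.limsup (fun m : ℕ => ((f m : ℝ) : EReal)) atTop = ((a : ℝ) : EReal) := by
  refine le_antisymm ?_ ?_
  · calc Filter.limsup (fun m : ℕ => ((f m : ℝ) : EReal)) atTop
        ≤ Filter.limsup (fun m : ℕ => ((h m : ℝ) : EReal)) atTop := by
          refine Filter.limsup_le_limsup ?_
          filter_upwards [h2] with m hm
          exact_mod_cast EReal.coe_le_coe_iff.mpr hm
      _ = ((a : ℝ) : EReal) := limsup_coe_eq hh
  · calc ((a : ℝ) : EReal) = Filter.limsup (fun m : ℕ => ((g m : ℝ) : EReal)) atTop :=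
          (limsup_coe_eq hg).symm
      _ ≤ Filter.limsup (fun m : ℕ => ((f m : ℝ) : EReal)) atTop := by
          refine Filter.limsup_le_limsup ?_
          filter_upwards [h1] with m hm
          exact_mod_cast EReal.coe_le_coe_iff.mpr hm

theorem limsup_coe_le {f h : ℕ → ℝ} {a : ℝ} (hh : Tendsto h atTop (nhds a))
    (h2 : ∀ᶠ m in atTop, f m ≤ h m) :
    Filter.limsup (fun m : ℕ => ((f m : ℝ) : EReal)) atTop ≤ ((a : ℝ) : EReal) := by
  calc Filter.limsup (fun m : ℕ => ((f m : ℝ) : EReal)) atTop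
      ≤ Filter.limsup (fun m : ℕ => ((h m : ℝ) : EReal)) atTop := by
        refine Filter.limsup_le_limsup ?_
        filter_upwards [h2] with m hm
        exact_mod_cast EReal.coe_le_coe_iff.mpr hm
    _ = ((a : ℝ) : EReal) := limsup_coe_eq hh


section Noeth4
variable [IsDomain R] [IsNoetherianRing R]

theorem logb_nat_le {N K m : ℕ} (hm : 2 ≤ m)
    (h : N ≤ K) : Real.logb m N ≤ Real.log K / Real.log m := by
  rw [Real.logb]
  have hpos : 0 < Real.log m := Real.log_pos (by exact_mod_cast hm)
  exact (div_le_div_iff_of_pos_right hpos).mpr (lognat_mono h)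

theorem le_logb_nat {N : ℕ} {y : ℝ} {m : ℕ} (hm : 2 ≤ m)
    (hy : 0 < y) (h : y ≤ (N : ℝ)) :
    Real.log y / Real.log m ≤ Real.logb m N := by
  rw [Real.logb]
  have hpos : 0 < Real.log m := Real.log_pos (by exact_mod_cast hm)
  exact (div_le_div_iff_of_pos_right hpos).mpr (Real.log_le_log hy h)

/-- the limsup along any frame is at most `n` -/
theorem limsup_frame_le {k : ℕ} (v : Fin k → A) :
    Filter.limsup (fun m : ℕ => ((Real.logb m (E.udim (E.framePow v m)) : ℝ) : EReal))
      Filter.atTop ≤ (((n : ℝ)) : EReal) := by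
  -- find a degree bound for the frame
  choose p hp using fun i => exists_mem_Dspan E (v i)
  set d : ℕ := (Finset.univ.sup p) + 1 with hd
  have hv : ∀ i, v i ∈ Dspan E d :=
    fun i => Dspan_mono E (le_trans (Finset.le_sup (Finset.mem_univ i)) (Nat.le_succ _)) (hp i)
  have hub := fun m => udim_framePow_le E v d hv m
  refine limsup_coe_le (h := fun m => (n : ℝ) * (Real.log ((d : ℝ) * m + 1) / Real.log m)) ?_ ?_
  · have := (tendsto_log_ratio (d : ℝ) 1 (by positivity)).const_mul (n : ℝ)
    simpa using this
  · filter_upwards [eventually_ge_atTop 2] with m hm2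
    have h1 := logb_nat_le hm2 (hub m)
    refine h1.trans (le_of_eq ?_)
    have hcast : (((d * m + 1) ^ n : ℕ) : ℝ) = ((d : ℝ) * m + 1) ^ n := by push_cast; ring
    rw [hcast, Real.log_pow, mul_div_assoc]

/-- the limsup along the standard frame is exactly `n` -/
theorem limsup_frame_v0 (hn : 0 < n) :
    Filter.limsup (fun m : ℕ => ((Real.logb m (E.udim (E.framePow (v0 x) m)) : ℝ) : EReal))
      Filter.atTop = (((n : ℝ)) : EReal) := by
  refine limsup_coe_squeeze
    (g := fun m => (n : ℝ) * ((Real.log m - Real.log n) / Real.log m))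
    (h := fun m => (n : ℝ) * (Real.log ((1 : ℝ) * m + 1) / Real.log m)) ?_ ?_ ?_ ?_
  · have := (tendsto_log_sub_ratio (Real.log n)).const_mul (n : ℝ)
    simpa using this
  · have := (tendsto_log_ratio (1 : ℝ) 1 one_pos).const_mul (n : ℝ)
    simpa using this
  · -- lower envelope
    filter_upwards [eventually_ge_atTop 2, eventually_ge_atTop (n + 1)] with m hm2 hmn
    have hlow := udim_framePow_v0_ge E hn m
    have hdiv : (m : ℝ) / n ≤ ((m / n + 1 : ℕ) : ℝ) := by
      have hmod := Nat.div_add_mod m n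
      have hmlt : m % n < n := Nat.mod_lt m hn
      have hring : (m / n + 1) * n = n * (m / n) + n := by ring
      have : m < (m / n + 1) * n := by omega
      rw [div_le_iff₀ (by exact_mod_cast hn : (0:ℝ) < (n:ℝ))]
      have := (Nat.le_of_lt this)
      calc (m : ℝ) ≤ ((m / n + 1) * n : ℕ) := by exact_mod_cast this
        _ = ((m / n + 1 : ℕ) : ℝ) * n := by push_cast; ring
    have hy : (0 : ℝ) < ((m : ℝ) / n) ^ n := by positivity
    have hyle : ((m : ℝ) / n) ^ n ≤ (E.udim (E.framePow (v0 x) m) : ℝ) := by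
      calc ((m : ℝ) / n) ^ n ≤ ((m / n + 1 : ℕ) : ℝ) ^ n :=
            pow_le_pow_left₀ (by positivity) hdiv n
        _ = (((m / n + 1) ^ n : ℕ) : ℝ) := by push_cast; ring
        _ ≤ _ := by exact_mod_cast hlow
    have h1 := le_logb_nat hm2 hy hyle
    refine le_trans (le_of_eq ?_) h1
    have hmne : (m : ℝ) ≠ 0 := by positivity
    have hnne : (n : ℝ) ≠ 0 := by
      have : (0:ℝ) < n := by exact_mod_cast hn
      exact ne_of_gt this
    rw [Real.log_pow, Real.log_div hmne hnne, mul_div_assoc]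
  · -- upper envelope
    filter_upwards [eventually_ge_atTop 2] with m hm2
    have hub := udim_framePow_le E (v0 x) 1 (v0_mem_Dspan_one E) m
    have h1 := logb_nat_le hm2 hub
    refine h1.trans (le_of_eq ?_)
    have hcast : (((1 * m + 1) ^ n : ℕ) : ℝ) = ((1 : ℝ) * m + 1) ^ n := by push_cast; ring
    rw [hcast, Real.log_pow, mul_div_assoc]

/-- `GGKdim = n` -/
theorem ggkdim_eq (hn : 0 < n) : E.GGKdim = (((n : ℝ)) : EReal) := by
  refine le_antisymm ?_ ?_
  · refine iSup_le fun k => iSup_le fun v => iSup_le fun _ => limsup_frame_le E v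
  · rw [SkewPBWExtension.GGKdim]
    refine le_iSup_of_le (n + 1) (le_iSup_of_le (v0 x) (le_iSup_of_le (isFrame_v0 E) ?_))
    exact le_of_eq (limsup_frame_v0 E hn).symm

end Noeth4

/-! ### the middle sequence -/

theorem hockey (hn : 0 < n) (m : ℕ) :
    ∑ i ∈ Finset.range (m + 1), (n + i - 1).choose i = (n + m).choose m := by
  have h1 : ∀ i, (n + i - 1).choose i = (n - 1 + i).choose (n - 1) := by
    intro i
    have he : n + i - 1 = n - 1 + i := by omega
    rw [he]
    have := Nat.choose_symm (n := n - 1 + i) (k := n - 1) (by omega)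
    have he2 : n - 1 + i - (n - 1) = i := by omega
    rw [he2] at this
    exact this
  rw [Finset.sum_congr rfl fun i _ => h1 i]
  have h2 : ∑ j ∈ Finset.Icc (n - 1) (n - 1 + m), j.choose (n - 1) =
      ∑ i ∈ Finset.range (m + 1), (n - 1 + i).choose (n - 1) := by
    rw [← Finset.Ico_add_one_right_eq_Icc, Finset.sum_Ico_eq_sum_range]
    have he : n - 1 + m + 1 - (n - 1) = m + 1 := by omega
    rw [he]
  rw [← h2, Nat.sum_Icc_choose]
  have he3 : n - 1 + m + 1 = n + m := by omega
  have he4 : n - 1 + 1 = n := by omega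
  rw [he3, he4]
  have := Nat.choose_symm (n := n + m) (k := n) (by omega)
  have he5 : n + m - n = m := by omega
  rw [he5] at this
  exact this.symm

theorem choose_le_pow_bound (hn : 0 < n) {m : ℕ} (hm : 1 ≤ m) :
    (n + m).choose m ≤ (n * m + 1) ^ n := by
  obtain ⟨a, rfl⟩ : ∃ a, n = a + 1 := ⟨n - 1, by omega⟩
  obtain ⟨b, rfl⟩ : ∃ b, m = b + 1 := ⟨m - 1, by omega⟩
  have h1 : (a + 1 + (b + 1)).choose (b + 1) = (a + 1 + (b + 1)).choose (a + 1) := by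
    have := Nat.choose_symm (n := a + 1 + (b + 1)) (k := a + 1) (by omega)
    have he : a + 1 + (b + 1) - (a + 1) = b + 1 := by omega
    rw [he] at this
    exact this
  rw [h1]
  refine le_trans (Nat.choose_le_pow _ _) (Nat.pow_le_pow_left ?_ _)
  have hexp : (a + 1) * (b + 1) = a * b + a + b + 1 := by ring
  omega

theorem limsup_middle (hn : 0 < n) :
    Filter.limsup
      (fun m : ℕ =>
        ((Real.logb m (∑ i ∈ Finset.range (m + 1), ((n + i - 1).choose i : ℝ)) : ℝ) : EReal))
      Filter.atTop = (((n : ℝ)) : EReal) := by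
  have hfun : ∀ m : ℕ, (∑ i ∈ Finset.range (m + 1), ((n + i - 1).choose i : ℝ))
      = (((n + m).choose m : ℕ) : ℝ) := by
    intro m
    rw [← Nat.cast_sum]
    exact_mod_cast congrArg (Nat.cast (R := ℝ)) (hockey hn m)
  have heq : (fun m : ℕ =>
      ((Real.logb m (∑ i ∈ Finset.range (m + 1), ((n + i - 1).choose i : ℝ)) : ℝ) : EReal)) =
      fun m : ℕ => ((Real.logb m (((n + m).choose m : ℕ) : ℝ) : ℝ) : EReal) := by
    funext m
    rw [hfun m]
  rw [heq]
  refine limsup_coe_squeeze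
    (g := fun m => (n : ℝ) * (Real.log ((1 : ℝ) * m + 1) / Real.log m) -
      Real.log (n.factorial) / Real.log m)
    (h := fun m => (n : ℝ) * (Real.log ((n : ℝ) * m + 1) / Real.log m)) ?_ ?_ ?_ ?_
  · have t1 := (tendsto_log_ratio (1 : ℝ) 1 one_pos).const_mul (n : ℝ)
    have t2 := tendsto_c_div_log (Real.log (n.factorial))
    have := t1.sub t2
    simpa using this
  · have := (tendsto_log_ratio (n : ℝ) 1 (by exact_mod_cast hn)).const_mul (n : ℝ)
    simpa using this
  · -- lower bound via `pow_le_choose`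
    filter_upwards [eventually_ge_atTop 2] with m hm2
    have hy : (0 : ℝ) < ((m : ℝ) + 1) ^ n / (n.factorial : ℝ) := by positivity
    have hle : ((m : ℝ) + 1) ^ n / (n.factorial : ℝ) ≤ (((n + m).choose m : ℕ) : ℝ) := by
      have := Nat.pow_le_choose (α := ℝ) n (n + m)
      have he : n + m + 1 - n = m + 1 := by omega
      rw [he] at this
      have hsym : (n + m).choose n = (n + m).choose m := by
        have h := Nat.choose_symm (n := n + m) (k := n) (by omega)
        have he5 : n + m - n = m := by omega
        rw [he5] at h
        exact h.symm
      calc ((m : ℝ) + 1) ^ n / (n.factorial : ℝ)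
          = (((m + 1 : ℕ) : ℝ)) ^ n / (n.factorial : ℝ) := by push_cast; ring
        _ ≤ (((n + m).choose n : ℕ) : ℝ) := this
        _ = (((n + m).choose m : ℕ) : ℝ) := by rw [hsym]
    have h1 := le_logb_nat hm2 hy hle
    refine le_trans (le_of_eq ?_) h1
    have hnum : (0:ℝ) < ((m : ℝ) + 1) ^ n := by positivity
    have hfac : (0:ℝ) < (n.factorial : ℝ) := by
      exact_mod_cast Nat.factorial_pos n
    rw [Real.log_div (ne_of_gt hnum) (ne_of_gt hfac), Real.log_pow]
    rw [sub_div, mul_div_assoc]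
    norm_num
  · -- upper bound
    filter_upwards [eventually_ge_atTop 2] with m hm2
    have h1 := logb_nat_le hm2 (choose_le_pow_bound hn (by omega : 1 ≤ m))
    refine h1.trans (le_of_eq ?_)
    have hcast : (((n * m + 1) ^ n : ℕ) : ℝ) = ((n : ℝ) * m + 1) ^ n := by push_cast; ring
    rw [hcast, Real.log_pow, mul_div_assoc]

end SPBW

/-! ### the Hilbert polynomial degree -/

theorem skewPBWHilbertPolynomial_natDegree (n : ℕ) :
    (skewPBWHilbertPolynomial n).natDegree = n - 1 := by
  rw [skewPBWHilbertPolynomial]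
  have hc : ((((n - 1).factorial : ℚ))⁻¹ : ℚ) ≠ 0 :=
    inv_ne_zero (by exact_mod_cast (n - 1).factorial_ne_zero)
  rw [Polynomial.natDegree_C_mul hc]
  rw [Polynomial.natDegree_prod _ _ (fun i _ => (Polynomial.monic_X_add_C _).ne_zero)]
  have h1 : ∀ i ∈ Finset.range (n - 1),
      (Polynomial.X + Polynomial.C ((i : ℚ) + 1)).natDegree = 1 :=
    fun i _ => Polynomial.natDegree_X_add_C _
  rw [Finset.sum_congr rfl h1]
  simp


/-- Let `R` be a left noetherian domain and `A = σ(R)⟨x_1,…,x_n⟩` a skew PBW extension,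
semi-graded by total degree (with `rank_R A_i = C(n+i-1, i)`).  Then
`GGKdim(A) = limsup_{m→∞} log_m (∑_{i=0}^m rank_R A_i) = 1 + deg Gp_A(t) = n`. -/
theorem skewPBWExtension_ggkdim [IsDomain R] [IsNoetherianRing R] (hn : 0 < n)
    (E : SkewPBWExtension R A n x) :
    E.GGKdim =
      Filter.limsup
        (fun m : ℕ =>
          ((Real.logb m (∑ i ∈ Finset.range (m + 1), ((n + i - 1).choose i : ℝ)) : ℝ) :
            EReal)) Filter.atTop ∧
    E.GGKdim = 1 + ((skewPBWHilbertPolynomial n).natDegree : ℝ) ∧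
    E.GGKdim = (n : ℝ) := by
  have hmain : E.GGKdim = (((n : ℝ)) : EReal) := SPBW.ggkdim_eq E hn
  refine ⟨?_, ?_, ?_⟩
  · rw [hmain, SPBW.limsup_middle hn]
  · rw [hmain, skewPBWHilbertPolynomial_natDegree]
    have h1 : ((n - 1 : ℕ) : ℝ) = (n : ℝ) - 1 := by
      have h2 : 1 ≤ n := hn
      push_cast [h2]
      ring
    rw [h1, ← EReal.coe_one, ← EReal.coe_add]
    norm_num
  · exact hmain
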